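/- (Strong convexity of the log-Frobenius-condition number on a sublevel set.) Let A be an invertible m×m complex matrix and let X be an invertible m×m complex matrix satisfying κ_F(XA) ≤ κ_F(A). Then, for every Hermitian m×m complex matrix H with tr(H) = 0, the function φ(t) = log κ_F(e^{tH} X A) is twice differentiable at t = 0 and φ''(0) ≥ 4·‖H‖_F² / κ_F(A)². -/

import Mathlib

open Matrix

/-- The matrix exponential of a square complex matrix. -/
noncomputable def mexp {k : ℕ} (A : Matrix (Fin k) (Fin k) ℂ) : Matrix (Fin k) (Fin k) ℂ :=
  NormedSpace.exp A

/-- The Frobenius norm `‖A‖_F = √(tr(A*A))` of a complex matrix. -/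
noncomputable def frob {m n : ℕ} (A : Matrix (Fin m) (Fin n) ℂ) : ℝ :=
  Real.sqrt (Matrix.trace (Aᴴ * A)).re

/-- The Frobenius condition number `κ_F(A) = ‖A‖_F · ‖A⁻¹‖_F`. -/
noncomputable def kappaF {k : ℕ} (A : Matrix (Fin k) (Fin k) ℂ) : ℝ :=
  frob A * frob A⁻¹

section Aux

open NormedSpace

set_option maxHeartbeats 1000000

variable {a b : ℕ}

theorem retr_sum (M : Matrix (Fin a) (Fin b) ℂ) :
    (Matrix.trace (Mᴴ * M)).re = ∑ j, ∑ i, ‖M i j‖ ^ 2 := by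
  simp only [Matrix.trace, Matrix.diag, Matrix.mul_apply, Matrix.conjTranspose_apply,
    Complex.re_sum]
  congr 1; ext j; congr 1; ext i
  rw [show star (M i j) = (starRingEnd ℂ) (M i j) from rfl, ← Complex.normSq_eq_conj_mul_self]
  rw [Complex.normSq_eq_norm_sq, Complex.ofReal_re]

theorem retr_nonneg (M : Matrix (Fin a) (Fin b) ℂ) : 0 ≤ (Matrix.trace (Mᴴ * M)).re := by
  rw [retr_sum]; positivity

theorem frob_nonneg (M : Matrix (Fin a) (Fin b) ℂ) : 0 ≤ frob M := Real.sqrt_nonneg _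

theorem frob_sq (M : Matrix (Fin a) (Fin b) ℂ) :
    frob M ^ 2 = (Matrix.trace (Mᴴ * M)).re :=
  Real.sq_sqrt (retr_nonneg M)

theorem frob_eq_norm (M : Matrix (Fin a) (Fin b) ℂ) :
    frob M = @norm _ (Matrix.frobeniusSeminormedAddCommGroup).toNorm M := by
  rw [Matrix.frobenius_norm_def, frob, retr_sum]
  rw [Real.sqrt_eq_rpow]
  congr 1
  rw [Finset.sum_comm]
  congr 1; ext i; congr 1; ext j
  rw [← Real.rpow_natCast ‖M i j‖ 2]; norm_num

theorem frob_conjTranspose (M : Matrix (Fin a) (Fin b) ℂ) : frob Mᴴ = frob M := by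
  rw [frob_eq_norm, frob_eq_norm]
  exact Matrix.frobenius_norm_conjTranspose M

theorem frob_mul_le {c : ℕ} (M : Matrix (Fin a) (Fin b) ℂ) (N : Matrix (Fin b) (Fin c) ℂ) :
    frob (M * N) ≤ frob M * frob N := by
  rw [frob_eq_norm, frob_eq_norm, frob_eq_norm]
  exact Matrix.frobenius_norm_mul M N

theorem frob_pos (M : Matrix (Fin a) (Fin b) ℂ) (h : M ≠ 0) : 0 < frob M := by
  rcases (frob_nonneg M).lt_or_eq with h' | h'
  · exact h'
  exfalso; apply h
  have h2 : (Matrix.trace (Mᴴ * M)).re = 0 := by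
    have := frob_sq M; rw [← h'] at this; simpa using this.symm
  rw [retr_sum] at h2
  ext i j
  have : ∀ j' ∈ Finset.univ, ∀ i' ∈ Finset.univ, (0:ℝ) ≤ ‖M i' j'‖^2 := by intros; positivity
  have hz := (Finset.sum_eq_zero_iff_of_nonneg
    (fun j' _ => Finset.sum_nonneg (this j' (Finset.mem_univ _)))).mp h2 j (Finset.mem_univ _)
  have hz2 := (Finset.sum_eq_zero_iff_of_nonneg (this j (Finset.mem_univ _))).mp hz i
    (Finset.mem_univ _)
  have : ‖M i j‖ = 0 := by nlinarith [norm_nonneg (M i j)]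
  simpa using this

theorem hasDerivAt_trexp {m : ℕ} (P K Q : Matrix (Fin m) (Fin m) ℂ) (t : ℝ) :
    HasDerivAt (fun u : ℝ => (Matrix.trace (P * exp ((u : ℂ) • K) * Q)).re)
      ((Matrix.trace ((P * K) * exp ((t : ℂ) • K) * Q)).re) t := by
  letI : NormedRing (Matrix (Fin m) (Fin m) ℂ) := Matrix.frobeniusNormedRing
  letI : NormedAlgebra ℝ (Matrix (Fin m) (Fin m) ℂ) := Matrix.frobeniusNormedAlgebra
  have h : ∀ u : ℝ, exp ((u : ℂ) • K) = exp (u • K) := by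
    intro u
    rw [← algebraMap_smul ℂ u K, Complex.coe_algebraMap]
  have hE : HasDerivAt (fun u : ℝ => exp (u • K)) (K * exp (t • K)) t :=
    hasDerivAt_exp_smul_const' K t
  set lin : Matrix (Fin m) (Fin m) ℂ →ₗ[ℝ] ℝ :=
    { toFun := fun M => (Matrix.trace (P * M * Q)).re
      map_add' := by intros; simp [Matrix.mul_add, Matrix.add_mul]
      map_smul' := by intros r M; simp [Matrix.mul_smul, Matrix.smul_mul, Complex.smul_re] }
    with hlin
  set ψ := LinearMap.toContinuousLinearMap lin with hψ
  have hc : HasDerivAt (fun u : ℝ => ψ (exp (u • K))) (ψ (K * exp (t • K))) t :=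
    ψ.hasFDerivAt.comp_hasDerivAt t hE
  have hval : ∀ M, ψ M = (Matrix.trace (P * M * Q)).re := fun M => rfl
  simp only [hval] at hc
  simp_rw [h]
  convert hc using 2
  rw [mul_assoc P K]

theorem core_ineq (m : ℕ) (hm : 0 < m) (M H : Matrix (Fin m) (Fin m) ℂ)
    (hM : IsUnit M) (hH : H.IsHermitian) (htr : Matrix.trace H = 0) :
    frob H ^ 2 / frob M⁻¹ ^ 2 ≤
      (Matrix.trace (Mᴴ * (H * H) * M)).re -
        (Matrix.trace (Mᴴ * H * M)).re ^ 2 / frob M ^ 2 := by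
  haveI : NeZero m := ⟨hm.ne'⟩
  have hdet : IsUnit M.det := (Matrix.isUnit_iff_isUnit_det M).mp hM
  haveI : Nonempty (Fin m) := ⟨⟨0, hm⟩⟩
  have hMne : M ≠ 0 := hM.ne_zero
  have hMinvU : IsUnit M⁻¹ := by
    obtain ⟨u, rfl⟩ := hM
    rw [Matrix.nonsing_inv_eq_ringInverse, Ring.inverse_unit]
    exact u⁻¹.isUnit
  have hMinvne : M⁻¹ ≠ 0 := hMinvU.ne_zero
  set A := frob M ^ 2 with hA
  have hApos : 0 < A := by rw [hA]; exact pow_pos (frob_pos M hMne) 2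
  set p := (Matrix.trace (Mᴴ * H * M)).re with hp
  set q := (Matrix.trace (Mᴴ * (H * H) * M)).re with hq
  set c : ℝ := p / A with hc
  set K : Matrix (Fin m) (Fin m) ℂ := H - (c : ℂ) • 1 with hK
  have hKherm : Kᴴ = K := by
    rw [hK, Matrix.conjTranspose_sub, hH.eq, Matrix.conjTranspose_smul]
    simp [Complex.star_def, Complex.conj_ofReal]
  have hAtr : (Matrix.trace (Mᴴ * M)).re = A := (frob_sq M).symm
  have hKK : K * K = H * H - (c:ℂ) • H - (c:ℂ) • H + ((c:ℂ) * (c:ℂ)) • (1 : Matrix (Fin m) (Fin m) ℂ) := by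
    rw [hK]
    simp only [sub_mul, mul_sub, smul_mul_assoc, mul_smul_comm, one_mul, mul_one, smul_smul]
    module
  have h1 : (Matrix.trace (Mᴴ * (K * K) * M)).re = q - 2 * c * p + c ^ 2 * A := by
    rw [hKK]
    have expand : Mᴴ * (H*H - (c:ℂ)•H - (c:ℂ)•H + ((c:ℂ)*(c:ℂ))•(1 : Matrix (Fin m) (Fin m) ℂ)) * M
        = Mᴴ*(H*H)*M - (c:ℂ)•(Mᴴ*H*M) - (c:ℂ)•(Mᴴ*H*M) + ((c:ℂ)*(c:ℂ))•(Mᴴ*M) := by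
      simp only [Matrix.mul_sub, Matrix.sub_mul, Matrix.mul_add, Matrix.add_mul,
        Matrix.mul_smul, Matrix.smul_mul, Matrix.mul_one]
    rw [expand]
    simp only [Matrix.trace_sub, Matrix.trace_add, Matrix.trace_smul, smul_eq_mul,
      Complex.sub_re, Complex.add_re, Complex.mul_re, Complex.ofReal_re, Complex.ofReal_im,
      Complex.mul_im]
    rw [hAtr]
    ring
  have h2 : frob (K * M) ^ 2 = q - 2 * c * p + c ^ 2 * A := by
    rw [frob_sq]
    have hE : (K * M)ᴴ * (K * M) = Mᴴ * (K * K) * M := by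
      rw [Matrix.conjTranspose_mul, hKherm]
      simp only [Matrix.mul_assoc]
    rw [hE, h1]
  have h3 : frob H ^ 2 + c ^ 2 * m = frob K ^ 2 := by
    rw [frob_sq, frob_sq, hKherm, hKK, hH.eq]
    have : Matrix.trace (H * H - (c:ℂ) • H - (c:ℂ) • H + ((c:ℂ)*(c:ℂ)) • (1 : Matrix (Fin m) (Fin m) ℂ))
        = Matrix.trace (H * H) - (c:ℂ) * Matrix.trace H - (c:ℂ) * Matrix.trace H
          + ((c:ℂ)*(c:ℂ)) * (m : ℂ) := by
      simp [Matrix.trace_sub, Matrix.trace_add, Matrix.trace_smul, smul_eq_mul, Matrix.trace_one]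
    rw [this, htr]
    simp only [mul_zero, sub_zero, Complex.add_re, Complex.mul_re, Complex.ofReal_re,
      Complex.ofReal_im, Complex.natCast_re, Complex.natCast_im, Complex.mul_im]
    ring
  have h4 : frob H ^ 2 ≤ frob K ^ 2 := by nlinarith [sq_nonneg c, Nat.cast_nonneg (α := ℝ) m]
  have h5 : frob K ≤ frob (K * M) * frob M⁻¹ := by
    conv_lhs => rw [show K = K * M * M⁻¹ by
      rw [Matrix.mul_assoc, Matrix.mul_nonsing_inv M hdet, Matrix.mul_one]]
    exact frob_mul_le _ _
  have hQ : q - 2 * c * p + c ^ 2 * A = q - p ^ 2 / A := by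
    rw [hc]; field_simp; ring
  have hMi : 0 < frob M⁻¹ := frob_pos _ hMinvne
  rw [div_le_iff₀ (pow_pos hMi 2), ← hQ, ← h2]
  nlinarith [frob_nonneg K, frob_nonneg (K * M),
    mul_le_mul h5 h5 (frob_nonneg K)
      (mul_nonneg (frob_nonneg _) (frob_nonneg _) : (0:ℝ) ≤ frob (K*M) * frob M⁻¹)]

theorem arith_final (a b h p q p' q' : ℝ) (ha : 0 < a) (hb : 0 < b) (hh : 0 ≤ h)
    (h1 : h / b ≤ q - p ^ 2 / a) (h2 : h / a ≤ q' - p' ^ 2 / b) :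
    4 * h / (a * b) ≤ 1 / 2 * ((4 * q * a - 2 * p * (2 * p)) / a ^ 2)
      + 1 / 2 * ((4 * q' * b - -(2 * p') * -(2 * p')) / b ^ 2) := by
  have e1 : 1 / 2 * ((4 * q * a - 2 * p * (2 * p)) / a ^ 2) = 2 * ((q - p ^ 2 / a) / a) := by
    field_simp; ring
  have e2 : 1 / 2 * ((4 * q' * b - -(2 * p') * -(2 * p')) / b ^ 2)
      = 2 * ((q' - p' ^ 2 / b) / b) := by
    field_simp; ring
  have e3 : 4 * h / (a * b) = 2 * ((h / b) / a) + 2 * ((h / a) / b) := by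
    field_simp; ring
  rw [e1, e2, e3]
  have c1 : 2 * ((h / b) / a) ≤ 2 * ((q - p ^ 2 / a) / a) := by gcongr
  have c2 : 2 * ((h / a) / b) ≤ 2 * ((q' - p' ^ 2 / b) / b) := by gcongr
  linarith

end Aux

/-- **Strong convexity of the log-Frobenius condition number on a sublevel set.**
If `A` is invertible and `X` is invertible with `κ_F(XA) ≤ κ_F(A)`, then for every
traceless Hermitian `H`, the function `φ(t) = log κ_F(e^{tH} X A)` is twice
differentiable at `0` and `φ''(0) ≥ 4‖H‖_F²/κ_F(A)²`. -/
theorem strong_convexity_log_kappaF (m : ℕ) (A X : Matrix (Fin m) (Fin m) ℂ)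
    (hA : IsUnit A) (hX : IsUnit X) (hsub : kappaF (X * A) ≤ kappaF A)
    (H : Matrix (Fin m) (Fin m) ℂ) (hH : H.IsHermitian) (htr : Matrix.trace H = 0) :
    let φ : ℝ → ℝ := fun t => Real.log (kappaF (mexp ((t : ℂ) • H) * X * A))
    DifferentiableAt ℝ φ 0 ∧ DifferentiableAt ℝ (deriv φ) 0 ∧
      4 * frob H ^ 2 / kappaF A ^ 2 ≤ deriv (deriv φ) 0 := by
  intro φ
  have hφdef : φ = fun t : ℝ => Real.log (kappaF (mexp ((t : ℂ) • H) * X * A)) := rfl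
  by_cases hm0 : m = 0
  · subst hm0
    have hfz : ∀ (N : Matrix (Fin 0) (Fin 0) ℂ), frob N = 0 := by
      intro N; simp [frob, Matrix.trace]
    have hφ0 : φ = fun _ => 0 := by
      funext t; rw [hφdef]
      simp only [kappaF, hfz, mul_zero, Real.log_zero]
    have hd0 : deriv φ = fun _ => 0 := by
      rw [hφ0]; funext x; simp
    refine ⟨by rw [hφ0]; exact differentiableAt_const _, ?_, ?_⟩
    · rw [hd0]; exact differentiableAt_const _
    · rw [hd0]
      have : deriv (fun _ : ℝ => (0:ℝ)) 0 = 0 := by simp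
      rw [this, hfz H]
      norm_num
  have hm : 0 < m := Nat.pos_of_ne_zero hm0
  haveI : Nonempty (Fin m) := ⟨⟨0, hm⟩⟩
  set B := X * A with hB
  have hBU : IsUnit B := hX.mul hA
  have hdetB : IsUnit B.det := (Matrix.isUnit_iff_isUnit_det B).mp hBU
  set C := B⁻¹ with hC
  have hCU : IsUnit C := by
    obtain ⟨u, hu⟩ := hBU
    rw [hC, ← hu, Matrix.nonsing_inv_eq_ringInverse, Ring.inverse_unit]
    exact u⁻¹.isUnit
  have hBne : B ≠ 0 := hBU.ne_zero
  have hCne : C ≠ 0 := hCU.ne_zero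
  set H₂ : Matrix (Fin m) (Fin m) ℂ := H + H with hH₂
  have hexpH : ∀ (t : ℝ) (K : Matrix (Fin m) (Fin m) ℂ), K.IsHermitian →
      (NormedSpace.exp ((t:ℂ) • K))ᴴ = NormedSpace.exp ((t:ℂ) • K) := by
    intro t K hK
    rw [← Matrix.exp_conjTranspose, Matrix.conjTranspose_smul, hK.eq, Complex.star_def,
      Complex.conj_ofReal]
  have hexpsq : ∀ (t : ℝ) (K : Matrix (Fin m) (Fin m) ℂ),
      NormedSpace.exp ((t:ℂ) • K) * NormedSpace.exp ((t:ℂ) • K)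
        = NormedSpace.exp ((t:ℂ) • (K + K)) := by
    intro t K
    rw [smul_add, Matrix.exp_add_of_commute _ _ (Commute.refl _)]
  have hexpinv : ∀ (t : ℝ) (K : Matrix (Fin m) (Fin m) ℂ),
      (NormedSpace.exp ((t:ℂ) • K))⁻¹ = NormedSpace.exp ((t:ℂ) • (-K)) := by
    intro t K
    rw [smul_neg, Matrix.exp_neg]
  have hexpU : ∀ (t : ℝ) (K : Matrix (Fin m) (Fin m) ℂ),
      IsUnit (NormedSpace.exp ((t:ℂ) • K)) := fun t K => Matrix.isUnit_exp _
  set f : ℝ → ℝ := fun t => (Matrix.trace (Bᴴ * NormedSpace.exp ((t:ℂ) • H₂) * B)).re with hf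
  set g : ℝ → ℝ := fun t => (Matrix.trace (C * NormedSpace.exp ((t:ℂ) • (-H₂)) * Cᴴ)).re with hg
  have main : ∀ t : ℝ, 0 < f t ∧ 0 < g t ∧
      φ t = (1/2) * Real.log (f t) + (1/2) * Real.log (g t) := by
    intro t
    set E := NormedSpace.exp ((t:ℂ) • H) with hE
    have hEU : IsUnit E := hexpU t H
    have hEBU : IsUnit (E * B) := hEU.mul hBU
    have hEBne : E * B ≠ 0 := hEBU.ne_zero
    have hEBinvU : IsUnit (E * B)⁻¹ := by
      obtain ⟨u, hu⟩ := hEBU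
      rw [← hu, Matrix.nonsing_inv_eq_ringInverse, Ring.inverse_unit]
      exact u⁻¹.isUnit
    have hEBinvne : (E * B)⁻¹ ≠ 0 := hEBinvU.ne_zero
    have hfsq : f t = frob (E * B) ^ 2 := by
      have mm : (E * B)ᴴ * (E * B) = Bᴴ * NormedSpace.exp ((t:ℂ) • H₂) * B := by
        rw [Matrix.conjTranspose_mul, hE, hexpH t H hH, hH₂, ← hexpsq t H]
        simp only [Matrix.mul_assoc]
      rw [frob_sq, mm]
    have hinv : (E * B)⁻¹ = C * NormedSpace.exp ((t:ℂ) • (-H)) := by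
      rw [Matrix.mul_inv_rev, ← hexpinv t H, hE, hC]
    have hE'H : (NormedSpace.exp ((t:ℂ) • (-H)))ᴴ = NormedSpace.exp ((t:ℂ) • (-H)) :=
      hexpH t (-H) (by unfold Matrix.IsHermitian; rw [Matrix.conjTranspose_neg, hH.eq])
    have hgsq : g t = frob ((E * B)⁻¹) ^ 2 := by
      rw [frob_sq, hinv]
      set E' := NormedSpace.exp ((t:ℂ) • (-H)) with hE'
      have m1 : (C * E')ᴴ * (C * E') = (E' * (Cᴴ * C)) * E' := by
        rw [Matrix.conjTranspose_mul, hE'H]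
        simp only [Matrix.mul_assoc]
      rw [m1, Matrix.trace_mul_comm]
      have m2 : E' * (E' * (Cᴴ * C)) = (NormedSpace.exp ((t:ℂ) • (-H + -H)) * Cᴴ) * C := by
        rw [← Matrix.mul_assoc, hexpsq t (-H)]
        simp only [Matrix.mul_assoc]
      rw [m2, Matrix.trace_mul_comm]
      show (Matrix.trace (C * NormedSpace.exp ((t:ℂ) • (-H₂)) * Cᴴ)).re = _
      rw [hH₂, neg_add]
      simp only [Matrix.mul_assoc]
    have hfpos : 0 < f t := by rw [hfsq]; exact pow_pos (frob_pos _ hEBne) 2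
    have hgpos : 0 < g t := by rw [hgsq]; exact pow_pos (frob_pos _ hEBinvne) 2
    refine ⟨hfpos, hgpos, ?_⟩
    rw [hφdef]
    show Real.log (kappaF (mexp ((t:ℂ) • H) * X * A)) = _
    have hEB : mexp ((t:ℂ) • H) * X * A = E * B := by
      rw [mexp, hE, hB, Matrix.mul_assoc]
    rw [hEB, kappaF]
    have h1 : frob (E * B) = Real.sqrt (f t) := by rw [hfsq, Real.sqrt_sq (frob_nonneg _)]
    have h2 : frob ((E * B)⁻¹) = Real.sqrt (g t) := by rw [hgsq, Real.sqrt_sq (frob_nonneg _)]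
    rw [h1, h2, Real.log_mul (ne_of_gt (Real.sqrt_pos.mpr hfpos)) (ne_of_gt (Real.sqrt_pos.mpr hgpos)),
      Real.log_sqrt hfpos.le, Real.log_sqrt hgpos.le]
    ring
  have hfpos : ∀ t, 0 < f t := fun t => (main t).1
  have hgpos : ∀ t, 0 < g t := fun t => (main t).2.1
  have hφeq : φ = fun t => (1/2) * Real.log (f t) + (1/2) * Real.log (g t) :=
    funext fun t => (main t).2.2
  set f1 : ℝ → ℝ :=
    fun t => (Matrix.trace ((Bᴴ * H₂) * NormedSpace.exp ((t:ℂ) • H₂) * B)).re with hf1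
  set f2 : ℝ → ℝ :=
    fun t => (Matrix.trace ((Bᴴ * H₂ * H₂) * NormedSpace.exp ((t:ℂ) • H₂) * B)).re with hf2
  set g1 : ℝ → ℝ :=
    fun t => (Matrix.trace ((C * -H₂) * NormedSpace.exp ((t:ℂ) • (-H₂)) * Cᴴ)).re with hg1
  set g2 : ℝ → ℝ :=
    fun t => (Matrix.trace ((C * -H₂ * -H₂) * NormedSpace.exp ((t:ℂ) • (-H₂)) * Cᴴ)).re with hg2
  have hdf : ∀ t, HasDerivAt f (f1 t) t := fun t => hasDerivAt_trexp Bᴴ H₂ B t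
  have hdf1 : ∀ t, HasDerivAt f1 (f2 t) t := fun t => hasDerivAt_trexp (Bᴴ * H₂) H₂ B t
  have hdg : ∀ t, HasDerivAt g (g1 t) t := fun t => hasDerivAt_trexp C (-H₂) Cᴴ t
  have hdg1 : ∀ t, HasDerivAt g1 (g2 t) t := fun t => hasDerivAt_trexp (C * -H₂) (-H₂) Cᴴ t
  set D : ℝ → ℝ := fun t => (1/2) * (f1 t / f t) + (1/2) * (g1 t / g t) with hD
  have hdφ : ∀ t, HasDerivAt φ (D t) t := by
    intro t
    rw [hφeq]
    exact (((hdf t).log (hfpos t).ne').const_mul (1/2)).add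
      (((hdg t).log (hgpos t).ne').const_mul (1/2))
  have hderiv : deriv φ = D := funext fun t => (hdφ t).deriv
  have hdD : HasDerivAt D ((1/2) * ((f2 0 * f 0 - f1 0 * f1 0) / f 0 ^ 2)
      + (1/2) * ((g2 0 * g 0 - g1 0 * g1 0) / g 0 ^ 2)) 0 :=
    (((hdf1 0).div (hdf 0) (hfpos 0).ne').const_mul (1/2)).add
      (((hdg1 0).div (hdg 0) (hgpos 0).ne').const_mul (1/2))
  refine ⟨(hdφ 0).differentiableAt, ?_, ?_⟩
  · rw [hderiv]; exact hdD.differentiableAt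
  rw [hderiv, hdD.deriv]
  have e0 : ∀ K : Matrix (Fin m) (Fin m) ℂ, NormedSpace.exp (((0:ℝ):ℂ) • K) = 1 := by
    intro K; rw [Complex.ofReal_zero, zero_smul, NormedSpace.exp_zero]
  set p := (Matrix.trace (Bᴴ * (H * B))).re with hp
  set q := (Matrix.trace (Bᴴ * (H * (H * B)))).re with hq
  set p' := (Matrix.trace (C * (H * Cᴴ))).re with hp'
  set q' := (Matrix.trace (C * (H * (H * Cᴴ)))).re with hq'
  have hf0 : f 0 = frob B ^ 2 := by
    show (Matrix.trace (Bᴴ * NormedSpace.exp (((0:ℝ):ℂ) • H₂) * B)).re = _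
    rw [e0, Matrix.mul_one, ← frob_sq]
  have hf10 : f1 0 = 2 * p := by
    show (Matrix.trace ((Bᴴ * H₂) * NormedSpace.exp (((0:ℝ):ℂ) • H₂) * B)).re = _
    rw [e0, Matrix.mul_one, hH₂]
    simp only [Matrix.mul_add, Matrix.add_mul, Matrix.trace_add, Complex.add_re,
      Matrix.mul_assoc]
    rw [← hp]; ring
  have hf20 : f2 0 = 4 * q := by
    show (Matrix.trace ((Bᴴ * H₂ * H₂) * NormedSpace.exp (((0:ℝ):ℂ) • H₂) * B)).re = _
    rw [e0, Matrix.mul_one, hH₂]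
    simp only [Matrix.mul_add, Matrix.add_mul, Matrix.trace_add, Complex.add_re,
      Matrix.mul_assoc]
    rw [← hq]; ring
  have hg0 : g 0 = frob C ^ 2 := by
    show (Matrix.trace (C * NormedSpace.exp (((0:ℝ):ℂ) • (-H₂)) * Cᴴ)).re = _
    rw [e0, Matrix.mul_one, ← frob_conjTranspose C, frob_sq, Matrix.conjTranspose_conjTranspose]
  have hg10 : g1 0 = -(2 * p') := by
    show (Matrix.trace ((C * -H₂) * NormedSpace.exp (((0:ℝ):ℂ) • (-H₂)) * Cᴴ)).re = _
    rw [e0, Matrix.mul_one, hH₂]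
    simp only [Matrix.mul_neg, Matrix.neg_mul, neg_neg, Matrix.mul_add, Matrix.add_mul,
      Matrix.trace_add, Matrix.trace_neg, Complex.neg_re, Complex.add_re, Matrix.mul_assoc]
    rw [← hp']; ring
  have hg20 : g2 0 = 4 * q' := by
    show (Matrix.trace ((C * -H₂ * -H₂) * NormedSpace.exp (((0:ℝ):ℂ) • (-H₂)) * Cᴴ)).re = _
    rw [e0, Matrix.mul_one, hH₂]
    simp only [Matrix.mul_neg, Matrix.neg_mul, neg_neg, Matrix.mul_add, Matrix.add_mul,
      Matrix.trace_add, Matrix.trace_neg, Complex.neg_re, Complex.add_re, Matrix.mul_assoc]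
    rw [← hq']; ring
  have hcore1 := core_ineq m hm B H hBU hH htr
  simp only [Matrix.mul_assoc] at hcore1
  rw [← hC, ← hp, ← hq] at hcore1
  have hCTU : IsUnit Cᴴ := by
    rw [Matrix.isUnit_iff_isUnit_det, Matrix.det_conjTranspose]
    exact ((Matrix.isUnit_iff_isUnit_det C).mp hCU).star
  have hcore2 := core_ineq m hm Cᴴ H hCTU hH htr
  simp only [Matrix.conjTranspose_conjTranspose, Matrix.mul_assoc] at hcore2
  have hCTinv : (Cᴴ)⁻¹ = Bᴴ := by
    rw [hC, Matrix.conjTranspose_nonsing_inv, Matrix.nonsing_inv_nonsing_inv Bᴴ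
      (by rw [Matrix.det_conjTranspose]; exact hdetB.star)]
  rw [hCTinv, frob_conjTranspose, frob_conjTranspose, ← hp', ← hq'] at hcore2
  have hbp : 0 < frob B := frob_pos B hBne
  have hcp : 0 < frob C := frob_pos C hCne
  have hκB2 : kappaF B = frob B * frob C := by rw [kappaF, ← hC]
  have hκBpos : 0 < kappaF B := by rw [hκB2]; exact mul_pos hbp hcp
  have hκApos : 0 < kappaF A := lt_of_lt_of_le hκBpos hsub
  rw [hf0, hf10, hf20, hg0, hg10, hg20]
  have step1 : 4 * frob H ^ 2 / kappaF A ^ 2 ≤ 4 * frob H ^ 2 / (frob B ^ 2 * frob C ^ 2) := by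
    have hBC : frob B ^ 2 * frob C ^ 2 = kappaF B ^ 2 := by rw [hκB2]; ring
    rw [hBC]
    have h2 : kappaF B ^ 2 ≤ kappaF A ^ 2 := pow_le_pow_left₀ hκBpos.le hsub 2
    gcongr
  refine le_trans step1 ?_
  exact arith_final (frob B ^ 2) (frob C ^ 2) (frob H ^ 2) p q p' q'
    (pow_pos hbp 2) (pow_pos hcp 2) (by positivity) hcore1 hcore2
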